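/- Let {X_k} be i.i.d. real random variables with partial sums S_k = X₁+⋯+X_k, let Y be independent of the X_k, and suppose: (i) the X_k are a.s. bounded above by a constant A>0 and P(X₁>α)>0 for some α>0; (ii) P(Y>u)>0 for all u and for some a with 0<a≤α, lim_{u→∞} P(Y>u+a)/P(Y>u) = 0. Then for every k≥1, lim_{u→∞} P(Y+S_k>u)/P(Y+S_{k+1}>u) = 0. -/

import Mathlib

open MeasureTheory ProbabilityTheory Filter Finset

section Aux

variable {Ω : Type*} [MeasurableSpace Ω] {μ : Measure Ω} [IsProbabilityMeasure μ]

/-- Combine independence of `Y` from the whole sequence with i.i.d.-ness of the `X i`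
into joint independence of the `Option ℕ`-indexed family. -/
lemma aux_iIndep_option (X : ℕ → Ω → ℝ) (Y : Ω → ℝ)
    (hXmeas : ∀ k, Measurable (X k)) (hYmeas : Measurable Y)
    (hXindep : iIndepFun X μ)
    (hYindep : IndepFun Y (fun ω => fun k => X k ω) μ) :
    iIndepFun
      (fun o => Option.elim o Y X) μ := by
  classical
  rw [iIndepFun_iff_measure_inter_preimage_eq_mul]
  intro S sets H
  set S' : Finset ℕ := (S.erase none).preimage some (Option.some_injective ℕ).injOn with hS'def
  have hmemS' : ∀ i : ℕ, i ∈ S' ↔ some i ∈ S := by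
    intro i
    simp [hS'def, Finset.mem_preimage, Finset.mem_erase]
  have hinter : (⋂ o ∈ S.erase none, (Option.elim o Y X) ⁻¹' sets o)
      = ⋂ i ∈ S', X i ⁻¹' sets (some i) := by
    ext ω
    simp only [Set.mem_iInter]
    constructor
    · intro h i hi
      exact h (some i) (Finset.mem_preimage.1 hi)
    · intro h o ho
      match o with
      | none => exact absurd (Finset.mem_erase.1 ho).1 (by simp)
      | some i => exact h i (Finset.mem_preimage.2 ho)
  have hS'meas : ∀ i ∈ S', MeasurableSet (sets (some i)) := fun i hi => H _ ((hmemS' i).1 hi)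
  have hXprod : μ (⋂ i ∈ S', X i ⁻¹' sets (some i))
      = ∏ i ∈ S', μ (X i ⁻¹' sets (some i)) :=
    hXindep.measure_inter_preimage_eq_mul S' (sets := fun i => sets (some i)) hS'meas
  have hprod : ∏ o ∈ S.erase none, μ ((Option.elim o Y X) ⁻¹' sets o)
      = ∏ i ∈ S', μ (X i ⁻¹' sets (some i)) := by
    rw [hS'def]
    refine (Finset.prod_preimage some (S.erase none) _
      (fun o => μ ((Option.elim o Y X) ⁻¹' sets o)) ?_).symm
    intro x hx hxr
    exfalso
    match x with
    | none => exact (Finset.mem_erase.1 hx).1 rfl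
    | some i => exact hxr ⟨i, rfl⟩
  by_cases hnone : none ∈ S
  · have hSdec : S = insert none (S.erase none) := (Finset.insert_erase hnone).symm
    rw [hSdec, Finset.set_biInter_insert, Finset.prod_insert (Finset.notMem_erase _ _), hinter,
      hprod]
    simp only [Option.elim_none]
    have hC : (⋂ i ∈ S', X i ⁻¹' sets (some i))
        = (fun ω => fun k => X k ω) ⁻¹' (⋂ i ∈ S', (fun x : ℕ → ℝ => x i) ⁻¹' sets (some i)) := by
      rw [Set.preimage_iInter₂]
      rfl
    have hCmeas : MeasurableSet (⋂ i ∈ S', (fun x : ℕ → ℝ => x i) ⁻¹' sets (some i)) :=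
      MeasurableSet.biInter (Set.to_countable _)
        (fun i hi => (measurable_pi_apply i) (hS'meas i hi))
    have := hYindep.measure_inter_preimage_eq_mul _ _ (H none hnone) hCmeas
    rw [hC]
    rw [this, ← hC, hXprod]
  · rw [← Finset.erase_eq_of_notMem hnone, hinter, hXprod, hprod]

/-- Tail of a sum of independent random variables as an integral against the law of one of them. -/
lemma aux_tail_conv {T W : Ω → ℝ} (hT : Measurable T) (hW : Measurable W)
    (h : IndepFun T W μ) (u : ℝ) :
    μ {ω | u < T ω + W ω} = ∫⁻ x, μ {ω | u - x < T ω} ∂(μ.map W) := by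
  have hmap : μ.map (fun ω => (W ω, T ω)) = (μ.map W).prod (μ.map T) :=
    (indepFun_iff_map_prod_eq_prod_map_map hW.aemeasurable hT.aemeasurable).1 h.symm
  have hs : MeasurableSet {p : ℝ × ℝ | u < p.1 + p.2} :=
    measurableSet_lt measurable_const (measurable_fst.add measurable_snd)
  calc μ {ω | u < T ω + W ω}
      = μ.map (fun ω => (W ω, T ω)) {p : ℝ × ℝ | u < p.1 + p.2} := by
        rw [Measure.map_apply (hW.prodMk hT) hs]
        congr 1
        ext ω
        simp [add_comm]
    _ = ∫⁻ x, (μ.map T) (Prod.mk x ⁻¹' {p : ℝ × ℝ | u < p.1 + p.2}) ∂(μ.map W) := by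
        rw [hmap, Measure.prod_apply hs]
    _ = ∫⁻ x, μ {ω | u - x < T ω} ∂(μ.map W) := by
        refine lintegral_congr fun x => ?_
        have hpre : Prod.mk x ⁻¹' {p : ℝ × ℝ | u < p.1 + p.2} = Set.Ioi (u - x) := by
          ext t
          simp only [Set.mem_preimage, Set.mem_setOf_eq, Set.mem_Ioi]
          constructor <;> intro ht <;> linarith
        rw [hpre, Measure.map_apply hT measurableSet_Ioi]
        rfl

end Aux

theorem lemma_Y_bounded_case
    {Ω : Type*} [MeasurableSpace Ω] (μ : Measure Ω) [IsProbabilityMeasure μ]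
    (X : ℕ → Ω → ℝ) (Y : Ω → ℝ)
    (hXmeas : ∀ k, Measurable (X k)) (hYmeas : Measurable Y)
    (hXindep : iIndepFun X μ)
    (hXid : ∀ k, Measure.map (X k) μ = Measure.map (X 0) μ)
    (hYindep : IndepFun Y (fun ω => fun k => X k ω) μ)
    (A α a : ℝ) (hA : 0 < A) (hα : 0 < α) (ha : 0 < a) (haα : a ≤ α)
    (hbdd : ∀ k, ∀ᵐ ω ∂μ, X k ω ≤ A)
    (hXα : 0 < (μ {ω | X 0 ω > α}).toReal)
    (hYpos : ∀ u : ℝ, 0 < (μ {ω | Y ω > u}).toReal)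
    (hYtail : Tendsto (fun u : ℝ =>
        (μ {ω | Y ω > u + a}).toReal / (μ {ω | Y ω > u}).toReal) atTop (nhds 0)) :
    ∀ k : ℕ, 1 ≤ k →
      Tendsto (fun u : ℝ =>
          (μ {ω | Y ω + ∑ i ∈ range k, X i ω > u}).toReal /
            (μ {ω | Y ω + ∑ i ∈ range (k + 1), X i ω > u}).toReal)
        atTop (nhds 0) := by
  classical
  -- basic measurability
  have hTmeas : ∀ k : ℕ, Measurable (fun ω => Y ω + ∑ i ∈ range k, X i ω) :=
    fun k => hYmeas.add (Finset.measurable_sum _ fun i _ => hXmeas i)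
  -- independence of the partial sum (including Y) from the next step
  have hg := aux_iIndep_option X Y hXmeas hYmeas hXindep hYindep
  have hgmeas : ∀ o : Option ℕ, Measurable (Option.elim o Y X) := by
    intro o
    match o with
    | none => exact hYmeas
    | some i => exact hXmeas i
  have hindep : ∀ k : ℕ,
      IndepFun (fun ω => Y ω + ∑ i ∈ range k, X i ω) (X k) μ := by
    intro k
    have hnotmem : (some k : Option ℕ) ∉ insert none ((range k).image some) := by
      simp
    have h := hg.indepFun_finset_sum_of_notMem hgmeas hnotmem
    have hsum : (∑ j ∈ insert none ((range k).image some), (fun o => Option.elim o Y X) j)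
        = fun ω => Y ω + ∑ i ∈ range k, X i ω := by
      rw [Finset.sum_insert (by simp)]
      rw [Finset.sum_image (fun i _ j _ h => Option.some_injective ℕ h)]
      funext ω
      simp [Finset.sum_apply]
    rwa [hsum] at h
  -- probability of X k exceeding α
  have hαk : ∀ k : ℕ, μ (X k ⁻¹' Set.Ioi α) = μ {ω | X 0 ω > α} := by
    intro k
    rw [← Measure.map_apply (hXmeas k) measurableSet_Ioi, hXid k,
      Measure.map_apply (hXmeas 0) measurableSet_Ioi]
    rfl
  have hp0 : μ {ω | X 0 ω > α} ≠ 0 := by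
    intro h0
    rw [h0] at hXα
    simp at hXα
  -- key induction: positivity and rapid tail decay for Y + S_k
  have key : ∀ k : ℕ,
      (∀ u : ℝ, μ {ω | u < Y ω + ∑ i ∈ range k, X i ω} ≠ 0) ∧
      (∀ δ : ℝ, 0 < δ → ∃ M : ℝ, ∀ u : ℝ, M ≤ u →
        μ {ω | u + a < Y ω + ∑ i ∈ range k, X i ω}
          ≤ ENNReal.ofReal δ * μ {ω | u < Y ω + ∑ i ∈ range k, X i ω}) := by
    intro k
    induction k with
    | zero =>
      have hset : ∀ v : ℝ, {ω | v < Y ω + ∑ i ∈ range 0, X i ω} = {ω | Y ω > v} := by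
        intro v
        ext ω
        simp [Set.mem_setOf_eq]
      constructor
      · intro u
        rw [hset u]
        intro h0
        have := hYpos u
        rw [h0] at this
        simp at this
      · intro δ hδ
        have hev : ∀ᶠ u in atTop,
            (μ {ω | Y ω > u + a}).toReal / (μ {ω | Y ω > u}).toReal < δ :=
          hYtail.eventually (gt_mem_nhds hδ)
        obtain ⟨M, hM⟩ := eventually_atTop.1 hev
        refine ⟨M, fun u hu => ?_⟩
        rw [hset (u + a), hset u]
        have hratio := hM u hu
        have hden : 0 < (μ {ω | Y ω > u}).toReal := hYpos u
        have hnum : (μ {ω | Y ω > u + a}).toReal < δ * (μ {ω | Y ω > u}).toReal :=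
          (div_lt_iff₀ hden).1 hratio
        have h1 : μ {ω | Y ω > u + a}
            = ENNReal.ofReal ((μ {ω | Y ω > u + a}).toReal) :=
          (ENNReal.ofReal_toReal (measure_ne_top μ _)).symm
        rw [h1]
        calc ENNReal.ofReal ((μ {ω | Y ω > u + a}).toReal)
            ≤ ENNReal.ofReal (δ * (μ {ω | Y ω > u}).toReal) :=
              ENNReal.ofReal_le_ofReal hnum.le
          _ = ENNReal.ofReal δ * ENNReal.ofReal ((μ {ω | Y ω > u}).toReal) :=
              ENNReal.ofReal_mul hδ.le
          _ = ENNReal.ofReal δ * μ {ω | Y ω > u} := by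
              rw [ENNReal.ofReal_toReal (measure_ne_top μ _)]
    | succ k ih =>
      obtain ⟨ihpos, ihtail⟩ := ih
      have hset : ∀ v : ℝ, {ω | v < Y ω + ∑ i ∈ range (k + 1), X i ω}
          = {ω | v < (fun ω => Y ω + ∑ i ∈ range k, X i ω) ω + X k ω} := by
        intro v
        ext ω
        simp [Finset.sum_range_succ, ← add_assoc]
      have hconv : ∀ v : ℝ, μ {ω | v < Y ω + ∑ i ∈ range (k + 1), X i ω}
          = ∫⁻ x, μ {ω | v - x < Y ω + ∑ i ∈ range k, X i ω} ∂(μ.map (X k)) := by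
        intro v
        rw [hset v]
        exact aux_tail_conv (hTmeas k) (hXmeas k) (hindep k) v
      constructor
      · intro u
        have hsub : (fun ω => Y ω + ∑ i ∈ range k, X i ω) ⁻¹' Set.Ioi (u - α)
            ∩ X k ⁻¹' Set.Ioi α ⊆ {ω | u < Y ω + ∑ i ∈ range (k + 1), X i ω} := by
          intro ω hω
          have h1 : u - α < Y ω + ∑ i ∈ range k, X i ω := hω.1
          have h2 : α < X k ω := hω.2
          simp only [Set.mem_setOf_eq, Finset.sum_range_succ]
          linarith
        have hmul := (hindep k).measure_inter_preimage_eq_mul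
          (s := Set.Ioi (u - α)) (t := Set.Ioi α) measurableSet_Ioi measurableSet_Ioi
        intro h0
        have hz : μ ((fun ω => Y ω + ∑ i ∈ range k, X i ω) ⁻¹' Set.Ioi (u - α)
            ∩ X k ⁻¹' Set.Ioi α) = 0 := measure_mono_null hsub h0
        rw [hmul, hαk k] at hz
        exact (mul_ne_zero (ihpos (u - α)) hp0) hz
      · intro δ hδ
        obtain ⟨M, hM⟩ := ihtail δ hδ
        refine ⟨M + A, fun u hu => ?_⟩
        have hae : ∀ᵐ x ∂(μ.map (X k)), x ≤ A :=
          (ae_map_iff (hXmeas k).aemeasurable measurableSet_Iic).2 (hbdd k)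
        rw [hconv (u + a), hconv u]
        calc ∫⁻ x, μ {ω | (u + a) - x < Y ω + ∑ i ∈ range k, X i ω} ∂(μ.map (X k))
            ≤ ∫⁻ x, ENNReal.ofReal δ * μ {ω | u - x < Y ω + ∑ i ∈ range k, X i ω}
                ∂(μ.map (X k)) := by
              refine lintegral_mono_ae (hae.mono fun x hx => ?_)
              have h1 : M ≤ u - x := by linarith
              have h2 := hM (u - x) h1
              have h3 : u + a - x = (u - x) + a := by ring
              rw [h3]
              exact h2
          _ = ENNReal.ofReal δ
              * ∫⁻ x, μ {ω | u - x < Y ω + ∑ i ∈ range k, X i ω} ∂(μ.map (X k)) :=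
              lintegral_const_mul' _ _ ENNReal.ofReal_ne_top
  -- conclude
  intro k _hk
  rw [Metric.tendsto_atTop]
  intro ε hε
  set p : ℝ := (μ {ω | X 0 ω > α}).toReal with hp_def
  have hp : 0 < p := hXα
  have hδpos : 0 < ε * p / 2 := by positivity
  obtain ⟨M, hM⟩ := (key k).2 (ε * p / 2) hδpos
  refine ⟨M + α, fun u hu => ?_⟩
  have hD0 : μ {ω | u - α < Y ω + ∑ i ∈ range k, X i ω} ≠ 0 := (key k).1 (u - α)
  set D : ℝ := (μ {ω | u - α < Y ω + ∑ i ∈ range k, X i ω}).toReal with hD_def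
  have hD : 0 < D := ENNReal.toReal_pos hD0 (measure_ne_top μ _)
  -- numerator bound
  have hnum_e : μ {ω | Y ω + ∑ i ∈ range k, X i ω > u}
      ≤ ENNReal.ofReal (ε * p / 2) * μ {ω | u - α < Y ω + ∑ i ∈ range k, X i ω} := by
    have hsub : {ω | Y ω + ∑ i ∈ range k, X i ω > u}
        ⊆ {ω | (u - α) + a < Y ω + ∑ i ∈ range k, X i ω} := by
      intro ω hω
      simp only [Set.mem_setOf_eq] at hω ⊢
      linarith
    exact le_trans (measure_mono hsub) (hM (u - α) (by linarith))
  have hnum : (μ {ω | Y ω + ∑ i ∈ range k, X i ω > u}).toReal ≤ ε * p / 2 * D := by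
    have := ENNReal.toReal_mono
      (ENNReal.mul_ne_top ENNReal.ofReal_ne_top (measure_ne_top μ _)) hnum_e
    rwa [ENNReal.toReal_mul, ENNReal.toReal_ofReal hδpos.le] at this
  -- denominator bound
  have hden_e : μ {ω | u - α < Y ω + ∑ i ∈ range k, X i ω} * μ {ω | X 0 ω > α}
      ≤ μ {ω | Y ω + ∑ i ∈ range (k + 1), X i ω > u} := by
    have hsub : (fun ω => Y ω + ∑ i ∈ range k, X i ω) ⁻¹' Set.Ioi (u - α)
        ∩ X k ⁻¹' Set.Ioi α ⊆ {ω | Y ω + ∑ i ∈ range (k + 1), X i ω > u} := by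
      intro ω hω
      have h1 : u - α < Y ω + ∑ i ∈ range k, X i ω := hω.1
      have h2 : α < X k ω := hω.2
      simp only [Set.mem_setOf_eq, Finset.sum_range_succ]
      linarith
    have hmul := (hindep k).measure_inter_preimage_eq_mul
      (s := Set.Ioi (u - α)) (t := Set.Ioi α) measurableSet_Ioi measurableSet_Ioi
    calc μ {ω | u - α < Y ω + ∑ i ∈ range k, X i ω} * μ {ω | X 0 ω > α}
        = μ ((fun ω => Y ω + ∑ i ∈ range k, X i ω) ⁻¹' Set.Ioi (u - α)
            ∩ X k ⁻¹' Set.Ioi α) := by rw [hmul, hαk k]; rfl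
      _ ≤ μ {ω | Y ω + ∑ i ∈ range (k + 1), X i ω > u} := measure_mono hsub
  have hden : D * p ≤ (μ {ω | Y ω + ∑ i ∈ range (k + 1), X i ω > u}).toReal := by
    have := ENNReal.toReal_mono (measure_ne_top μ _) hden_e
    rwa [ENNReal.toReal_mul] at this
  have hdenpos : 0 < (μ {ω | Y ω + ∑ i ∈ range (k + 1), X i ω > u}).toReal :=
    lt_of_lt_of_le (by positivity) hden
  have hratio : (μ {ω | Y ω + ∑ i ∈ range k, X i ω > u}).toReal /
      (μ {ω | Y ω + ∑ i ∈ range (k + 1), X i ω > u}).toReal ≤ ε / 2 := by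
    have h1 : (μ {ω | Y ω + ∑ i ∈ range k, X i ω > u}).toReal /
        (μ {ω | Y ω + ∑ i ∈ range (k + 1), X i ω > u}).toReal
        ≤ (ε * p / 2 * D) / (D * p) := by
      gcongr
    have h2 : (ε * p / 2 * D) / (D * p) = ε / 2 := by
      rw [show ε * p / 2 * D = ε / 2 * (D * p) by ring, mul_div_assoc,
        div_self (by positivity : (0:ℝ) < D * p).ne', mul_one]
    linarith
  rw [Real.dist_eq, sub_zero,
    abs_of_nonneg (div_nonneg ENNReal.toReal_nonneg ENNReal.toReal_nonneg)]
  linarith
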